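/- Let H be a nonempty proper CCD subset of V(P_n) for the path P_n with n ≥ 2 and vertices v_1,…,v_n. Then v_n ∈ H if and only if v_{n-1} ∉ H. -/

import Mathlib

open Finset

variable {V : Type*} [Fintype V] [DecidableEq V]

/-- Number of neighbours of `v` inside the set `S`. -/
def nbrsIn (G : SimpleGraph V) [DecidableRel G.Adj] (S : Finset V) (v : V) : ℕ :=
  (S.filter (fun u => G.Adj v u)).card

/-- `H` is complementary component dominant (CCD). -/
def CCD (G : SimpleGraph V) [DecidableRel G.Adj] (H : Finset V) : Prop :=
  (∀ x y, G.Adj x y → x ∈ H → y ∈ H → nbrsIn G Hᶜ x = nbrsIn G Hᶜ y) ∧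
  (∀ u v, G.Adj u v → u ∉ H → v ∉ H → nbrsIn G H u = nbrsIn G H v)

/-- The path graph on `n` vertices `0, 1, …, n-1`. -/
def pathG (n : ℕ) : SimpleGraph (Fin n) where
  Adj i j := i.val + 1 = j.val ∨ j.val + 1 = i.val
  symm := ⟨by intro i j h; tauto⟩
  loopless := ⟨by intro i h; rcases h with h | h <;> omega⟩

instance (n : ℕ) : DecidableRel (pathG n).Adj :=
  fun i j => inferInstanceAs (Decidable (i.val + 1 = j.val ∨ j.val + 1 = i.val))

lemma count_zero_not_mem {n : ℕ} (S : Finset (Fin n)) (v u : Fin n)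
    (hadj : (pathG n).Adj v u) (h0 : nbrsIn (pathG n) S v = 0) : u ∉ S := by
  intro hu
  have hmem : u ∈ S.filter (fun w => (pathG n).Adj v w) :=
    Finset.mem_filter.mpr ⟨hu, hadj⟩
  have : S.filter (fun w => (pathG n).Adj v w) = ∅ := Finset.card_eq_zero.mp h0
  rw [this] at hmem
  exact absurd hmem (Finset.notMem_empty u)

lemma last_count {n : ℕ} (hn : 2 ≤ n) (S : Finset (Fin n))
    (hS : (⟨n - 2, Nat.sub_lt (by omega) (by omega)⟩ : Fin n) ∉ S) :
    nbrsIn (pathG n) S ⟨n - 1, Nat.sub_lt (by omega) (by omega)⟩ = 0 := by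
  rw [nbrsIn, Finset.card_eq_zero, Finset.filter_eq_empty_iff]
  intro u hu hadj
  have hult := u.isLt
  rcases hadj with hh | hh
  · simp only [] at hh; omega
  · have : u = ⟨n - 2, by omega⟩ := Fin.ext (by simp at hh ⊢; omega)
    exact hS (this ▸ hu)

lemma all_in_of_two {n : ℕ} (hn : 2 ≤ n) (H : Finset (Fin n)) (h : CCD (pathG n) H)
    (h1 : (⟨n - 1, Nat.sub_lt (by omega) (by omega)⟩ : Fin n) ∈ H) (h2 : (⟨n - 2, Nat.sub_lt (by omega) (by omega)⟩ : Fin n) ∈ H) :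
    ∀ i, i ≤ n - 1 →
      (⟨n - 1 - i, by omega⟩ : Fin n) ∈ H ∧
        nbrsIn (pathG n) Hᶜ ⟨n - 1 - i, by omega⟩ = 0 := by
  intro i
  induction i with
  | zero =>
    intro _
    refine ⟨h1, ?_⟩
    exact last_count hn Hᶜ (by simpa using h2)
  | succ i ih =>
    intro hi
    obtain ⟨hu, hc⟩ := ih (by omega)
    set u : Fin n := ⟨n - 1 - i, by omega⟩ with hudef
    set v : Fin n := ⟨n - 1 - (i + 1), by omega⟩ with hvdef
    have hadj : (pathG n).Adj u v := by
      right; simp [hudef, hvdef, pathG]; omega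
    have hv : v ∈ H := by
      have := count_zero_not_mem Hᶜ u v hadj hc
      simpa using this
    refine ⟨hv, ?_⟩
    have := h.1 v u hadj.symm hv hu
    rw [this, hc]

lemma all_out_of_two {n : ℕ} (hn : 2 ≤ n) (H : Finset (Fin n)) (h : CCD (pathG n) H)
    (h1 : (⟨n - 1, Nat.sub_lt (by omega) (by omega)⟩ : Fin n) ∉ H) (h2 : (⟨n - 2, Nat.sub_lt (by omega) (by omega)⟩ : Fin n) ∉ H) :
    ∀ i, i ≤ n - 1 →
      (⟨n - 1 - i, by omega⟩ : Fin n) ∉ H ∧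
        nbrsIn (pathG n) H ⟨n - 1 - i, by omega⟩ = 0 := by
  intro i
  induction i with
  | zero =>
    intro _
    exact ⟨h1, last_count hn H h2⟩
  | succ i ih =>
    intro hi
    obtain ⟨hu, hc⟩ := ih (by omega)
    set u : Fin n := ⟨n - 1 - i, by omega⟩ with hudef
    set v : Fin n := ⟨n - 1 - (i + 1), by omega⟩ with hvdef
    have hadj : (pathG n).Adj u v := by
      right; simp [hudef, hvdef, pathG]; omega
    have hv : v ∉ H := count_zero_not_mem H u v hadj hc
    refine ⟨hv, ?_⟩
    have := h.2 v u hadj.symm hv hu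
    rw [this, hc]

/-- For a nonempty proper CCD subset of `P_n` (`n ≥ 2`), the last vertex is in
`H` iff the second-to-last vertex is not. -/
theorem last_iff_not_secondLast (n : ℕ) (hn : 2 ≤ n) (H : Finset (Fin n))
    (hne : H.Nonempty) (hproper : H ≠ Finset.univ) (h : CCD (pathG n) H) :
    (⟨n - 1, by omega⟩ : Fin n) ∈ H ↔ (⟨n - 2, by omega⟩ : Fin n) ∉ H := by
  constructor
  · intro h1 h2
    apply hproper
    apply Finset.eq_univ_iff_forall.mpr
    intro v
    have hvlt := v.isLt
    have := (all_in_of_two hn H h h1 h2 (n - 1 - v.val) (by omega)).1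
    have hv : (⟨n - 1 - (n - 1 - v.val), by omega⟩ : Fin n) = v := Fin.ext (by simp; omega)
    rwa [hv] at this
  · intro h2
    by_contra h1
    obtain ⟨w, hw⟩ := hne
    have hwlt := w.isLt
    have := (all_out_of_two hn H h h1 h2 (n - 1 - w.val) (by omega)).1
    have hv : (⟨n - 1 - (n - 1 - w.val), by omega⟩ : Fin n) = w := Fin.ext (by simp; omega)
    rw [hv] at this
    exact this hw
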